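/- Let n ≥ 3 and let S_1, …, S_n be finite sets with |S_i| ≥ 2 for all i. Then there exist subsets B_{-i} ⊆ ∏_{j≠i} S_j for i = 1, …, n such that the cylinders C_i = S_i × B_{-i} (viewed as subsets of S = ∏_j S_j) are pairwise disjoint and each satisfies |C_i| ≥ (1/(2n)^{log₂ 3}) · ∏_{j=1}^n |S_j|. -/

import Mathlib

/-- Partial Boolean descriptor of the `i`-th cylinder: constraint imposed at
coordinate `p` (among the first `k+1` coordinates).  `c` gives the column codes
of "generic" players `i > k`. -/
def pdesc (k : ℕ) (c : ℕ → ℕ) (i p : ℕ) : Option Bool :=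
  if p = 0 then
    if 1 ≤ i ∧ i ≤ k then some (decide (i % 2 = 0)) else none
  else if p ≤ k then
    if i = 0 then some (decide (p = k))
    else if i ≤ k then (if p = i then none else some (decide (p < i)))
    else some ((c i).testBit (p - 1))
  else none

lemma pdesc_self (k : ℕ) (c : ℕ → ℕ) (i : ℕ) : pdesc k c i i = none := by
  unfold pdesc
  split_ifs <;> first | rfl | omega

lemma pdesc_zero (k : ℕ) (c : ℕ → ℕ) {p : ℕ} (hp : 1 ≤ p) (hpk : p ≤ k) :
    pdesc k c 0 p = some (decide (p = k)) := by
  unfold pdesc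
  split_ifs <;> first | rfl | omega

lemma pdesc_spec0 (k : ℕ) (c : ℕ → ℕ) {i : ℕ} (hi : 1 ≤ i) (hik : i ≤ k) :
    pdesc k c i 0 = some (decide (i % 2 = 0)) := by
  unfold pdesc
  split_ifs <;> first | rfl | omega

lemma pdesc_spec (k : ℕ) (c : ℕ → ℕ) {i p : ℕ} (hi : 1 ≤ i) (hik : i ≤ k)
    (hp : 1 ≤ p) (hpk : p ≤ k) (hpi : p ≠ i) :
    pdesc k c i p = some (decide (p < i)) := by
  unfold pdesc
  split_ifs <;> first | rfl | omega

lemma pdesc_gen (k : ℕ) (c : ℕ → ℕ) {i p : ℕ} (hik : k < i)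
    (hp : 1 ≤ p) (hpk : p ≤ k) :
    pdesc k c i p = some ((c i).testBit (p - 1)) := by
  unfold pdesc
  split_ifs <;> first | rfl | omega

lemma pdesc_support (k : ℕ) (c : ℕ → ℕ) (a : ℕ) :
    ∀ p, pdesc k c a p ≠ none →
      p ≤ k ∧ p ≠ (if 1 ≤ a ∧ a ≤ k then a else 0) := by
  intro p h
  unfold pdesc at h
  split_ifs at h <;> first | exact absurd rfl h | (split_ifs <;> omega)
lemma pdesc_conflict (k : ℕ) (hk : 2 ≤ k) (c : ℕ → ℕ) (i i' : ℕ) (h : i < i')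
    (hlti : k < i → c i < 2 ^ k)
    (hlt : k < i' → c i' < 2 ^ k)
    (hne : k < i' → ∀ m, m ≤ k → c i' ≠ 2 ^ m - 1)
    (hstar : k < i' → c i' ≠ 2 ^ (k - 1))
    (hinj : k < i → k < i' → c i ≠ c i') :
    ∃ p b b', p ≤ k ∧ pdesc k c i p = some b ∧ pdesc k c i' p = some b' ∧ b ≠ b' := by
  by_cases hi0 : i = 0
  · subst hi0
    by_cases hi'k : i' ≤ k
    · -- zero vs special
      by_cases hik : i' = k
      · refine ⟨1, _, _, by omega, pdesc_zero k c (by omega) (by omega),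
          pdesc_spec k c (by omega) hi'k (by omega) (by omega) (by omega), ?_⟩
        simp only [ne_eq, decide_eq_decide, true_iff, iff_true, false_iff, iff_false]; omega
      · refine ⟨k, _, _, le_rfl, pdesc_zero k c (by omega) le_rfl,
          pdesc_spec k c (by omega) hi'k (by omega) le_rfl (by omega), ?_⟩
        simp only [ne_eq, decide_eq_decide, true_iff, iff_true, false_iff, iff_false]; omega
    · -- zero vs generic
      have hgi' : k < i' := by omega
      have hbit : ∃ t, t < k ∧ (c i').testBit t ≠ decide (t + 1 = k) := by
        by_contra hcon
        push_neg at hcon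
        apply hstar hgi'
        apply Nat.eq_of_testBit_eq
        intro t
        by_cases ht : t < k
        · rw [hcon t ht, Nat.testBit_two_pow]
          simp only [decide_eq_decide, true_iff, iff_true, false_iff, iff_false]; omega
        · have hc1 : c i' < 2 ^ t :=
            lt_of_lt_of_le (hlt hgi') (Nat.pow_le_pow_right (by omega) (by omega))
          have hc2 : (2:ℕ) ^ (k - 1) < 2 ^ t := by
            have ha : (2:ℕ) ^ (k - 1) < 2 ^ k := Nat.pow_lt_pow_right (by omega) (by omega)
            have hb : (2:ℕ) ^ k ≤ 2 ^ t := Nat.pow_le_pow_right (by omega) (by omega)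
            omega
          rw [Nat.testBit_lt_two_pow hc1, Nat.testBit_lt_two_pow hc2]
      obtain ⟨t, htk, hb⟩ := hbit
      exact ⟨t + 1, _, _, by omega, pdesc_zero k c (by omega) (by omega),
        pdesc_gen k c hgi' (by omega) (by omega), by simpa using (Ne.symm hb)⟩
  · by_cases hik : i ≤ k
    · by_cases hi'k : i' ≤ k
      · -- special vs special
        by_cases hpar : i % 2 = i' % 2
        · refine ⟨i + 1, _, _, by omega,
            pdesc_spec k c (by omega) hik (by omega) (by omega) (by omega),
            pdesc_spec k c (by omega) hi'k (by omega) (by omega) (by omega), ?_⟩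
          simp only [ne_eq, decide_eq_decide, true_iff, iff_true, false_iff, iff_false]; omega
        · refine ⟨0, _, _, by omega, pdesc_spec0 k c (by omega) hik,
            pdesc_spec0 k c (by omega) hi'k, ?_⟩
          simp only [ne_eq, decide_eq_decide, true_iff, iff_true, false_iff, iff_false]; omega
      · -- special vs generic
        have hgi' : k < i' := by omega
        have hbit : ∃ t, t < k ∧ t ≠ i - 1 ∧ (c i').testBit t ≠ decide (t + 1 < i) := by
          by_contra hcon
          push_neg at hcon
          have heq : c i' = if (c i').testBit (i - 1) then 2 ^ i - 1 else 2 ^ (i - 1) - 1 := by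
            apply Nat.eq_of_testBit_eq
            intro t
            by_cases ht : t < k
            · by_cases hti : t = i - 1
              · subst hti
                by_cases hc : (c i').testBit (i - 1) = true
                · rw [if_pos hc, hc, Nat.testBit_two_pow_sub_one]
                  symm; rw [decide_eq_true_eq]; omega
                · rw [if_neg hc, Nat.testBit_two_pow_sub_one]
                  simp only [Bool.not_eq_true] at hc
                  rw [hc]
                  symm; rw [decide_eq_false_iff_not]; omega
              · rw [hcon t ht hti]
                split_ifs <;>
                  · rw [Nat.testBit_two_pow_sub_one]
                    simp only [decide_eq_decide, true_iff, iff_true, false_iff, iff_false]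
                    omega
            · have h2tk : (2:ℕ) ^ k ≤ 2 ^ t := Nat.pow_le_pow_right (by omega) (by omega)
              have hik2 : (2:ℕ) ^ i ≤ 2 ^ k := Nat.pow_le_pow_right (by omega) hik
              have hik3 : (2:ℕ) ^ (i-1) ≤ 2 ^ k := Nat.pow_le_pow_right (by omega) (by omega)
              have h1 : (1:ℕ) ≤ 2 ^ i := Nat.one_le_two_pow
              have h1' : (1:ℕ) ≤ 2 ^ (i-1) := Nat.one_le_two_pow
              have hc1 : c i' < 2 ^ t := lt_of_lt_of_le (hlt hgi') h2tk
              have hc2 : (if (c i').testBit (i - 1) then 2 ^ i - 1 else 2 ^ (i - 1) - 1) < 2 ^ t := by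
                split_ifs <;> omega
              rw [Nat.testBit_lt_two_pow hc1, Nat.testBit_lt_two_pow hc2]
          by_cases hc : (c i').testBit (i - 1) = true
          · rw [if_pos hc] at heq
            exact hne hgi' i hik heq
          · rw [if_neg hc] at heq
            exact hne hgi' (i - 1) (by omega) heq
        obtain ⟨t, htk, hti, hb⟩ := hbit
        exact ⟨t + 1, _, _, by omega,
          pdesc_spec k c (by omega) hik (by omega) (by omega) (by omega),
          pdesc_gen k c hgi' (by omega) (by omega), Ne.symm hb⟩
    · -- generic vs generic
      have hgi : k < i := by omega
      have hgi' : k < i' := by omega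
      have hbit : ∃ t, t < k ∧ (c i).testBit t ≠ (c i').testBit t := by
        by_contra hcon
        push_neg at hcon
        apply hinj hgi hgi'
        apply Nat.eq_of_testBit_eq
        intro t
        by_cases ht : t < k
        · exact hcon t ht
        · have hc1 : c i < 2 ^ t :=
            lt_of_lt_of_le (hlti hgi) (Nat.pow_le_pow_right (by omega) (by omega))
          have hc2 : c i' < 2 ^ t :=
            lt_of_lt_of_le (hlt hgi') (Nat.pow_le_pow_right (by omega) (by omega))
          rw [Nat.testBit_lt_two_pow hc1, Nat.testBit_lt_two_pow hc2]
      obtain ⟨t, htk, hb⟩ := hbit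
      exact ⟨t + 1, _, _, by omega, pdesc_gen k c hgi (by omega) (by omega),
        pdesc_gen k c hgi' (by omega) (by omega), hb⟩
lemma two_pow_pred_gt (m : ℕ) (hm : 3 ≤ m) : m < 2 ^ (m - 1) := by
  induction m with
  | zero => omega
  | succ p ih =>
    rcases Nat.lt_or_ge p 3 with h | h
    · have hp2 : p = 2 := by omega
      subst hp2; norm_num
    · have h1 := ih (by omega)
      have h2 : (2:ℕ) ^ p = 2 * 2 ^ (p - 1) := by
        rw [← pow_succ']
        congr 1
        omega
      simp only [Nat.succ_sub_one]
      omega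

/-- Cylinder-packing lemma: for `n ≥ 3` and finite sets `S_i` with `|S_i| ≥ 2`,
there are pairwise disjoint `i`-cylinders `C_i` (sets not depending on the `i`-th
coordinate) with `|C_i| ≥ (1/(2n)^{log₂ 3})·∏_j |S_j|`. -/
theorem stmt_11 (n : ℕ) (hn : 3 ≤ n) (α : Fin n → Type)
    [∀ j, Fintype (α j)] [∀ j, DecidableEq (α j)]
    (hcard : ∀ j, 2 ≤ Fintype.card (α j)) :
    ∃ C : Fin n → Finset (∀ j, α j),
      (∀ i, ∀ x y : ∀ j, α j, (∀ j, j ≠ i → x j = y j) → (x ∈ C i ↔ y ∈ C i)) ∧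
      (∀ i i', i ≠ i' → Disjoint (C i) (C i')) ∧
      (∀ i, (1 / ((2 * (n : ℝ)) ^ (Real.logb 2 3))) * ∏ j, (Fintype.card (α j) : ℝ)
          ≤ ((C i).card : ℝ)) := by
  classical
  obtain ⟨k, hk2, hkn3, hnk, hkn⟩ :
      ∃ k : ℕ, 2 ≤ k ∧ k + 1 ≤ n ∧ n < 2 ^ k ∧ 2 ^ (k - 1) ≤ n := by
    refine ⟨Nat.log2 n + 1, ?_, ?_, Nat.lt_log2_self,
      by simpa using Nat.log2_self_le (by omega : n ≠ 0)⟩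
    · have := (Nat.le_log2 (by omega : n ≠ 0)).mpr (by omega : 2 ^ 1 ≤ n)
      omega
    · have h2 : Nat.log2 n < n - 1 := by
        rw [Nat.log2_lt (by omega)]
        exact two_pow_pred_gt n hn
      omega
  -- halves of each strategy set
  have hhalf := fun j : Fin n =>
    Finset.exists_subset_card_eq
      (s := (Finset.univ : Finset (α j))) (n := Fintype.card (α j) / 2)
      (by rw [Finset.card_univ]; exact Nat.div_le_self _ _)
  choose B hBsub hBcard using hhalf
  -- column codes for generic players
  set Fbad : Finset ℕ :=
    (Finset.range (k + 1)).image (fun m => 2 ^ m - 1) ∪ {2 ^ (k - 1)} with hFbad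
  set Scol : Finset ℕ := (Finset.range (2 ^ k)).filter
      (fun x => (∀ m ≤ k, x ≠ 2 ^ m - 1) ∧ x ≠ 2 ^ (k - 1)) with hScol
  have hScard : n - (k + 1) ≤ Scol.card := by
    have hsub : Finset.range (2 ^ k) \ Fbad ⊆ Scol := by
      intro x hx
      rw [Finset.mem_sdiff] at hx
      obtain ⟨hx1, hx2⟩ := hx
      rw [hScol, Finset.mem_filter]
      refine ⟨hx1, fun m hm hxm => hx2 ?_, fun hxs => hx2 ?_⟩
      · rw [hFbad, Finset.mem_union]
        exact Or.inl (Finset.mem_image.mpr ⟨m, Finset.mem_range.mpr (by omega), hxm.symm⟩)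
      · rw [hFbad, Finset.mem_union]
        exact Or.inr (by simp [hxs])
    have h1 := Finset.le_card_sdiff Fbad (Finset.range (2 ^ k))
    have h2 : Fbad.card ≤ k + 2 := by
      rw [hFbad]
      refine le_trans (Finset.card_union_le _ _) ?_
      have h3 := Finset.card_image_le (s := Finset.range (k + 1)) (f := fun m => 2 ^ m - 1)
      simp only [Finset.card_range, Finset.card_singleton] at h3 ⊢
      omega
    have h3 := Finset.card_le_card hsub
    have h4 : (Finset.range (2 ^ k)).card = 2 ^ k := Finset.card_range _
    omega
  set emb := Scol.orderEmbOfCardLe hScard with hemb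
  set c : ℕ → ℕ :=
    fun a => if h : a - (k + 1) < n - (k + 1) then emb ⟨a - (k + 1), h⟩ else 0 with hc
  have hcmem : ∀ a, k < a → a < n → c a ∈ Scol := by
    intro a ha han
    rw [hc]
    dsimp only
    rw [dif_pos (by omega : a - (k + 1) < n - (k + 1))]
    exact Finset.orderEmbOfCardLe_mem _ _ _
  have hcprop : ∀ a, k < a → a < n →
      c a < 2 ^ k ∧ (∀ m ≤ k, c a ≠ 2 ^ m - 1) ∧ c a ≠ 2 ^ (k - 1) := by
    intro a ha han
    have hmem := hcmem a ha han
    rw [hScol, Finset.mem_filter, Finset.mem_range] at hmem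
    exact ⟨hmem.1, hmem.2.1, hmem.2.2⟩
  have hcinj : ∀ a a', k < a → a < n → k < a' → a' < n → a ≠ a' → c a ≠ c a' := by
    intro a a' ha han ha' ha'n hne hca
    rw [hc] at hca
    dsimp only at hca
    rw [dif_pos (by omega : a - (k + 1) < n - (k + 1)),
      dif_pos (by omega : a' - (k + 1) < n - (k + 1))] at hca
    have h5 := emb.injective hca
    have h6 : a - (k + 1) = a' - (k + 1) := congrArg Fin.val h5
    omega
  have hconf : ∀ a a' : Fin n, a.val < a'.val →
      ∃ p b b', p ≤ k ∧ pdesc k c a.val p = some b ∧ pdesc k c a'.val p = some b' ∧ b ≠ b' := by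
    intro a a' hlt'
    apply pdesc_conflict k hk2 c a.val a'.val hlt'
    · intro h; exact (hcprop a.val h a.isLt).1
    · intro h; exact (hcprop a'.val h a'.isLt).1
    · intro h; exact (hcprop a'.val h a'.isLt).2.1
    · intro h; exact (hcprop a'.val h a'.isLt).2.2
    · intro h h'; exact hcinj _ _ h a.isLt h' a'.isLt (by omega)
  -- the cylinders
  let A : (i : Fin n) → (j : Fin n) → Finset (α j) := fun i j =>
    (pdesc k c i.val j.val).elim Finset.univ (fun b => if b then B j else (B j)ᶜ)
  refine ⟨fun i => Fintype.piFinset (A i), ?_, ?_, ?_⟩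
  · -- cylinder property
    intro i x y hxy
    have hAi : A i i = Finset.univ := by
      show (pdesc k c i.val i.val).elim _ _ = _
      rw [pdesc_self]
      rfl
    simp only [Fintype.mem_piFinset]
    constructor
    · intro hmem j
      by_cases hj : j = i
      · subst hj; rw [hAi]; exact Finset.mem_univ _
      · rw [← hxy j hj]; exact hmem j
    · intro hmem j
      by_cases hj : j = i
      · subst hj; rw [hAi]; exact Finset.mem_univ _
      · rw [hxy j hj]; exact hmem j
  · -- disjointness
    intro i i' hii
    have key : ∀ a a' : Fin n, a.val < a'.val → ∀ x : ∀ j, α j,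
        x ∈ Fintype.piFinset (A a) → x ∈ Fintype.piFinset (A a') → False := by
      intro a a' hlt' x hx hx'
      obtain ⟨p, b, b', hpk, hd, hd', hbb⟩ := hconf a a' hlt'
      have hpn : p < n := by omega
      have h1 := Fintype.mem_piFinset.mp hx ⟨p, hpn⟩
      have h2 := Fintype.mem_piFinset.mp hx' ⟨p, hpn⟩
      have e1 : A a ⟨p, hpn⟩ = if b then B ⟨p, hpn⟩ else (B ⟨p, hpn⟩)ᶜ := by
        show (pdesc k c a.val p).elim _ _ = _
        rw [hd]
        rfl
      have e2 : A a' ⟨p, hpn⟩ = if b' then B ⟨p, hpn⟩ else (B ⟨p, hpn⟩)ᶜ := by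
        show (pdesc k c a'.val p).elim _ _ = _
        rw [hd']
        rfl
      rw [e1] at h1
      rw [e2] at h2
      cases b <;> cases b'
      · exact hbb rfl
      · simp only [Bool.false_eq_true, ↓reduceIte, Finset.mem_compl] at h1 h2
        exact h1 h2
      · simp only [Bool.false_eq_true, ↓reduceIte, Finset.mem_compl] at h1 h2
        exact h2 h1
      · exact hbb rfl
    rw [Finset.disjoint_left]
    intro x hx hx'
    rcases lt_trichotomy i.val i'.val with h | h | h
    · exact key i i' h x hx hx'
    · exact hii (Fin.ext h)
    · exact key i' i h x hx' hx
  · -- cardinality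
    intro i
    have hAcard : ∀ j : Fin n, (Fintype.card (α j) : ℝ) ≤
        (if pdesc k c i.val j.val = none then 1 else 3) * ((A i j).card : ℝ) := by
      intro j
      rcases hd : pdesc k c i.val j.val with _ | b
      · rw [if_pos rfl]
        have hAe : A i j = Finset.univ := by
          show (pdesc k c i.val j.val).elim _ _ = _
          rw [hd]
          rfl
        rw [hAe, Finset.card_univ, one_mul]
      · rw [if_neg (by simp [hd])]
        have hAe : A i j = if b then B j else (B j)ᶜ := by
          show (pdesc k c i.val j.val).elim _ _ = _
          rw [hd]
          rfl
        have hm2 := hcard j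
        have hcompl : ((B j)ᶜ).card = Fintype.card (α j) - Fintype.card (α j) / 2 := by
          rw [Finset.card_compl, hBcard j]
        have hnat : Fintype.card (α j) ≤ 3 * (if b then B j else (B j)ᶜ).card := by
          cases b
          · simp only [Bool.false_eq_true, if_false]
            rw [hcompl]
            omega
          · simp only [if_true]
            rw [hBcard j]
            omega
        rw [hAe]
        exact_mod_cast hnat
    have hcount : (Finset.univ.filter fun j : Fin n => ¬ (pdesc k c i.val j.val = none)).card ≤ k := by
      set hole : ℕ := if 1 ≤ i.val ∧ i.val ≤ k then i.val else 0 with hhole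
      have hmemhole : hole ∈ Finset.range (k + 1) := by
        rw [Finset.mem_range, hhole]
        split_ifs <;> omega
      have hcle := Finset.card_le_card_of_injOn
        (s := Finset.univ.filter fun j : Fin n => ¬ (pdesc k c i.val j.val = none))
        (t := (Finset.range (k + 1)).erase hole) (fun j => j.val) ?_ ?_
      · rw [Finset.card_erase_of_mem hmemhole, Finset.card_range] at hcle
        omega
      · intro j hj
        rw [Finset.mem_coe, Finset.mem_filter] at hj
        obtain ⟨hp1, hp2⟩ := pdesc_support k c i.val j.val hj.2
        simp only [Finset.mem_coe, Finset.mem_erase, Finset.mem_range]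
        exact ⟨by rw [hhole]; exact hp2, by omega⟩
      · exact fun a _ b _ hab => Fin.val_injective hab
    have hQnn : (0:ℝ) ≤ ∏ j, ((A i j).card : ℝ) :=
      Finset.prod_nonneg (fun j _ => by positivity)
    have hprod1 : ∏ j, (Fintype.card (α j) : ℝ) ≤
        (3:ℝ) ^ k * ∏ j, ((A i j).card : ℝ) := by
      have step1 : ∏ j, (Fintype.card (α j) : ℝ) ≤
          ∏ j, ((if pdesc k c i.val j.val = none then (1:ℝ) else 3) * ((A i j).card : ℝ)) :=
        Finset.prod_le_prod (fun j _ => by positivity) (fun j _ => hAcard j)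
      rw [Finset.prod_mul_distrib] at step1
      have step2 : (∏ j : Fin n, (if pdesc k c i.val j.val = none then (1:ℝ) else 3)) ≤ 3 ^ k := by
        rw [Finset.prod_ite, Finset.prod_const, Finset.prod_const, one_pow, one_mul]
        exact pow_le_pow_right₀ (by norm_num) hcount
      exact le_trans step1 (mul_le_mul_of_nonneg_right step2 hQnn)
    have hcardC : ((Fintype.piFinset (A i)).card : ℝ) = ∏ j, ((A i j).card : ℝ) := by
      rw [Fintype.card_piFinset]
      push_cast
      rfl
    rw [hcardC]
    have h2npos : (0:ℝ) < 2 * n := by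
      have h3n : (3:ℝ) ≤ (n:ℝ) := by exact_mod_cast hn
      linarith
    have h3k : (3:ℝ) ^ k ≤ (2 * (n:ℝ)) ^ Real.logb 2 3 := by
      have hident : (2 * (n:ℝ)) ^ Real.logb 2 3 = (3:ℝ) ^ Real.logb 2 (2 * n) := by
        rw [Real.rpow_def_of_pos h2npos, Real.rpow_def_of_pos (by norm_num : (0:ℝ) < 3),
          Real.logb, Real.logb]
        congr 1
        ring
      rw [hident]
      have hk' : (k:ℝ) ≤ Real.logb 2 (2 * n) := by
        rw [Real.le_logb_iff_rpow_le (by norm_num) h2npos, Real.rpow_natCast]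
        have hnat : (2:ℕ) ^ k ≤ 2 * n := by
          have h2 : (2:ℕ) ^ k = 2 * 2 ^ (k - 1) := by
            rw [← pow_succ']
            congr 1
            omega
          omega
        exact_mod_cast hnat
      calc (3:ℝ) ^ k = (3:ℝ) ^ ((k:ℕ):ℝ) := (Real.rpow_natCast _ _).symm
        _ ≤ (3:ℝ) ^ Real.logb 2 (2 * n) := by
            rw [Real.rpow_le_rpow_left_iff (by norm_num : (1:ℝ) < 3)]
            exact hk'
    have hPnn : (0:ℝ) ≤ ∏ j, (Fintype.card (α j) : ℝ) :=
      Finset.prod_nonneg (fun j _ => by positivity)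
    have h3kpos : (0:ℝ) < 3 ^ k := by positivity
    have step : 1 / ((2 * (n:ℝ)) ^ Real.logb 2 3) * ∏ j, (Fintype.card (α j):ℝ)
        ≤ 1 / ((3:ℝ) ^ k) * ∏ j, (Fintype.card (α j):ℝ) := by
      exact mul_le_mul_of_nonneg_right (one_div_le_one_div_of_le h3kpos h3k) hPnn
    refine le_trans step ?_
    rw [div_mul_eq_mul_div, one_mul, div_le_iff₀ h3kpos]
    calc ∏ j, (Fintype.card (α j):ℝ) ≤ 3 ^ k * ∏ j, ((A i j).card:ℝ) := hprod1
      _ = (∏ j, ((A i j).card:ℝ)) * 3 ^ k := by ring
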